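/- Let Γ be a finitely generated residually finite group in which every finitely generated subgroup is closed in the profinite topology (i.e., Γ is LERF). Then every Grothendieck pair φ: Λ → Γ with Λ finitely generated is trivial, i.e., φ is surjective. -/

import Mathlib

/-- The index type of finite quotients: finite-index normal subgroups. -/
def FinQuot (G : Type*) [Group G] : Type _ :=
  {N : Subgroup G // N.Normal ∧ N.FiniteIndex}

instance {G : Type*} [Group G] (N : FinQuot G) : N.1.Normal := N.2.1
instance {G : Type*} [Group G] (N : FinQuot G) : N.1.FiniteIndex := N.2.2

instance {G : Type*} [Group G] (N : FinQuot G) : TopologicalSpace (G ⧸ N.1) := ⊥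

/-- The subgroup of compatible families in the product of all finite quotients. -/
def profCompat (G : Type*) [Group G] : Subgroup (Π N : FinQuot G, G ⧸ N.1) where
  carrier := {x | ∀ (N M : FinQuot G) (h : N.1 ≤ M.1),
    QuotientGroup.map N.1 M.1 (MonoidHom.id G) (by simpa using h) (x N) = x M}
  one_mem' := by intro N M h; simp
  mul_mem' := by
    intro a b ha hb N M h
    simp only [Pi.mul_apply, map_mul, ha N M h, hb N M h]
  inv_mem' := by
    intro a ha N M h
    simp only [Pi.inv_apply, map_inv, ha N M h]

/-- The profinite completion of a group, as the inverse limit of its finite quotients. -/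
def ProfComp (G : Type*) [Group G] : Type _ := profCompat G

instance {G : Type*} [Group G] : Group (ProfComp G) :=
  inferInstanceAs (Group (profCompat G))

instance {G : Type*} [Group G] : TopologicalSpace (ProfComp G) :=
  inferInstanceAs (TopologicalSpace {x : Π N : FinQuot G, G ⧸ N.1 // x ∈ profCompat G})

/-- The canonical map from a group to its profinite completion. -/
def toProf (G : Type*) [Group G] : G →* ProfComp G where
  toFun g := ⟨fun N => QuotientGroup.mk g, by
    intro N M h
    simp [QuotientGroup.map_mk]⟩
  map_one' := by apply Subtype.ext; funext N; rfl
  map_mul' a b := by apply Subtype.ext; funext N; rfl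

/-- The pullback of a finite-index normal subgroup along a homomorphism. -/
def pullFQ {Λ Γ : Type*} [Group Λ] [Group Γ] (φ : Λ →* Γ) (N : FinQuot Γ) : FinQuot Λ :=
  ⟨N.1.comap φ, N.2.1.comap φ, ⟨by
    refine ne_zero_of_dvd_ne_zero N.2.2.index_ne_zero ?_
    rw [Subgroup.index_comap]
    exact Subgroup.relIndex_dvd_index_of_normal N.1 φ.range⟩⟩

/-- The induced homomorphism between profinite completions. -/
def profMap {Λ Γ : Type*} [Group Λ] [Group Γ] (φ : Λ →* Γ) :
    ProfComp Λ →* ProfComp Γ where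
  toFun x := ⟨fun N => QuotientGroup.map (pullFQ φ N).1 N.1 φ le_rfl (x.1 (pullFQ φ N)), by
    intro N M h
    obtain ⟨g, hg⟩ := QuotientGroup.mk_surjective (x.1 (pullFQ φ N))
    have hx := x.2 (pullFQ φ N) (pullFQ φ M) (Subgroup.comap_mono h)
    show QuotientGroup.map _ _ _ _
        (QuotientGroup.map _ _ φ _ (x.1 (pullFQ φ N))) =
      QuotientGroup.map _ _ φ _ (x.1 (pullFQ φ M))
    rw [← hx, ← hg]
    rfl⟩
  map_one' := by
    apply Subtype.ext
    funext N
    show QuotientGroup.map _ _ φ _ ((1 : ProfComp Λ).1 (pullFQ φ N)) = _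
    rw [show ((1 : ProfComp Λ).1 (pullFQ φ N)) = 1 from rfl, map_one]
    rfl
  map_mul' a b := by
    apply Subtype.ext
    funext N
    show QuotientGroup.map _ _ _ _ ((a * b).1 (pullFQ φ N)) = _
    have : (a * b).1 (pullFQ φ N) = a.1 (pullFQ φ N) * b.1 (pullFQ φ N) := rfl
    rw [this, map_mul]
    rfl

/-- A group is residually finite if every nontrivial element survives in some finite
quotient. -/
def ResiduallyFinite (G : Type*) [Group G] : Prop :=
  ∀ g : G, g ≠ 1 → ∃ N : Subgroup G, N.Normal ∧ N.FiniteIndex ∧ g ∉ N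

/-- If `Γ` is a finitely generated residually finite LERF group (every finitely
generated subgroup is an intersection of finite-index subgroups), then every
Grothendieck pair `φ : Λ → Γ` is trivial, i.e. `φ` is surjective. -/
theorem lerf_right_grothendieck_rigid {Γ : Type*} [Group Γ]
    (hΓfg : Group.FG Γ) (hΓrf : ResiduallyFinite Γ)
    (hLERF : ∀ H : Subgroup Γ, H.FG → ∃ S : Set (Subgroup Γ),
      (∀ K ∈ S, K.FiniteIndex) ∧ H = sInf S) :
    ∀ (Λ : Type*) [Group Λ], ∀ (φ : Λ →* Γ), Group.FG Λ → ResiduallyFinite Λ →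
      Function.Injective φ → Function.Bijective (profMap φ) →
      Function.Surjective φ := by
  intro Λ _ φ hΛfg _ _ hbij
  by_contra hns
  -- there is γ ∉ φ.range
  have hrange : φ.range ≠ ⊤ := by
    intro h
    exact hns fun g => by
      have : g ∈ φ.range := h ▸ Subgroup.mem_top g
      exact this
  obtain ⟨γ, hγ⟩ : ∃ γ : Γ, γ ∉ φ.range := by
    by_contra h
    push_neg at h
    exact hrange ((Subgroup.eq_top_iff' _).2 h)
  -- φ.range is finitely generated
  have hrfg : φ.range.FG := by
    haveI := hΛfg
    exact (Group.fg_iff_subgroup_fg φ.range).1 (Group.fg_range φ)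
  obtain ⟨S, hSfi, hSinf⟩ := hLERF φ.range hrfg
  -- find K ∈ S with γ ∉ K
  obtain ⟨K, hKS, hγK⟩ : ∃ K ∈ S, γ ∉ K := by
    by_contra h
    push_neg at h
    exact hγ (hSinf ▸ Subgroup.mem_sInf.2 h)
  have hrK : φ.range ≤ K := hSinf ▸ sInf_le hKS
  haveI : K.FiniteIndex := hSfi K hKS
  -- pass to the normal core
  set N : FinQuot Γ := ⟨K.normalCore, Subgroup.normalCore_normal K, Subgroup.finiteIndex_normalCore K⟩
  -- the element toProf Γ γ is not in the range of profMap φ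
  obtain ⟨x, hx⟩ := hbij.2 (toProf Γ γ)
  have hxN := congrFun (congrArg Subtype.val hx) N
  obtain ⟨l, hl⟩ := QuotientGroup.mk_surjective (x.1 (pullFQ φ N))
  have : QuotientGroup.map (pullFQ φ N).1 N.1 φ le_rfl (x.1 (pullFQ φ N)) =
      QuotientGroup.mk γ := hxN
  rw [← hl] at this
  change (QuotientGroup.mk (φ l) : Γ ⧸ N.1) = QuotientGroup.mk γ at this
  have hmem : γ⁻¹ * φ l ∈ N.1 := by
    rw [QuotientGroup.eq] at this
    simpa using (N.1.inv_mem this)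
  have hφl : φ l ∈ K := hrK ⟨l, rfl⟩
  have : γ ∈ K := by
    have hnk : γ⁻¹ * φ l ∈ K := K.normalCore_le hmem
    have := K.mul_mem hφl (K.inv_mem hnk)
    simpa [mul_assoc] using this
  exact hγK this
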